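/- Define G(s, n, N) = ∫₀^∞ y^{s+1/2} Γ(−1/2, ny) Γ(−1/2, Ny) e^{ny} dy/y for positive reals n ≤ N. Then G(s, n, N) converges absolutely for real s > 1/2, and satisfies the bound G(s, n, n) ≪_s n^{−s−1/2} for fixed real s > 1/2. -/

import Mathlib

open Real MeasureTheory

/-- The (real) upper incomplete gamma function Γ(a, y) = ∫_y^∞ t^{a-1} e^{-t} dt. -/
noncomputable def realIncGamma (a y : ℝ) : ℝ :=
  ∫ t in Set.Ioi y, t ^ (a - 1) * Real.exp (-t)

/-- G(s, n, N) = ∫₀^∞ y^{s+1/2} Γ(−1/2, ny) Γ(−1/2, Ny) e^{ny} dy/y. -/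
noncomputable def Gfun (s n N : ℝ) : ℝ :=
  ∫ y in Set.Ioi (0 : ℝ),
    y ^ (s + 1/2) * realIncGamma (-(1/2)) (n * y) * realIncGamma (-(1/2)) (N * y)
      * Real.exp (n * y) / y

open Set

lemma incGamma_integrand_integrableOn {x : ℝ} (hx : 0 < x) :
    IntegrableOn (fun t : ℝ => t ^ (-(1/2:ℝ) - 1) * Real.exp (-t)) (Set.Ioi x) := by
  apply Integrable.mono' (integrableOn_Ioi_rpow_of_lt (by norm_num : (-(1/2:ℝ)-1) < -1) hx)
  · apply ContinuousOn.aestronglyMeasurable ?_ measurableSet_Ioi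
    exact (ContinuousOn.rpow_const continuousOn_id
      (fun t ht => Or.inl (hx.trans ht).ne')).mul (continuousOn_id.neg.rexp)
  · filter_upwards [ae_restrict_mem measurableSet_Ioi] with t ht
    have ht0 : 0 < t := hx.trans ht
    rw [Real.norm_eq_abs, abs_of_nonneg (by positivity)]
    nth_rewrite 2 [show t ^ (-(1/2:ℝ)-1) = t ^ (-(1/2:ℝ)-1) * 1 by ring]
    gcongr
    exact Real.exp_le_one_iff.2 (by linarith)

lemma incGamma_nonneg {x : ℝ} (hx : 0 < x) : 0 ≤ realIncGamma (-(1/2)) x := by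
  refine setIntegral_nonneg measurableSet_Ioi (fun t ht => ?_)
  have : 0 < t := hx.trans ht
  positivity

lemma incGamma_anti {a b : ℝ} (ha : 0 < a) (hab : a ≤ b) :
    realIncGamma (-(1/2)) b ≤ realIncGamma (-(1/2)) a := by
  refine setIntegral_mono_set (incGamma_integrand_integrableOn ha) ?_
    (HasSubset.Subset.eventuallyLE (Ioi_subset_Ioi hab))
  filter_upwards [ae_restrict_mem measurableSet_Ioi] with t ht
  have : 0 < t := ha.trans ht
  positivity

lemma incGamma_le {x : ℝ} (hx : 0 < x) :
    realIncGamma (-(1/2)) x ≤ 2 * x ^ (-(1/2:ℝ)) * Real.exp (-x) := by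
  have h1 : realIncGamma (-(1/2)) x
      ≤ ∫ t in Set.Ioi x, t ^ (-(1/2:ℝ) - 1) * Real.exp (-x) := by
    refine setIntegral_mono_on (incGamma_integrand_integrableOn hx)
      ((integrableOn_Ioi_rpow_of_lt (by norm_num) hx).mul_const _) measurableSet_Ioi
      (fun t ht => ?_)
    have ht0 : 0 < t := hx.trans ht
    gcongr
    exact le_of_lt ht
  refine h1.trans ?_
  rw [integral_mul_const, integral_Ioi_rpow_of_lt (by norm_num) hx]
  apply le_of_eq
  have : (-(1/2:ℝ) - 1) + 1 = -(1/2:ℝ) := by ring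
  rw [this]
  ring

lemma gammaType_integrableOn {a r : ℝ} (ha : 0 < a) (hr : 0 < r) :
    IntegrableOn (fun t : ℝ => t ^ (a - 1) * Real.exp (-(r * t))) (Set.Ioi 0) := by
  have h2 : IntegrableOn (fun x : ℝ => Real.exp (-(r * x)) * (r * x) ^ (a - 1))
      (Set.Ioi 0) := by
    have := (integrableOn_Ioi_comp_mul_left_iff
      (fun x : ℝ => Real.exp (-x) * x ^ (a - 1)) 0 hr).2
      (by simpa using Real.GammaIntegral_convergent ha)
    simpa using this
  have h3 : IntegrableOn
      (fun x : ℝ => (r ^ (a - 1))⁻¹ * (Real.exp (-(r * x)) * (r * x) ^ (a - 1)))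
      (Set.Ioi 0) := h2.const_mul _
  refine h3.congr_fun (fun t ht => ?_) measurableSet_Ioi
  have ht0 : 0 < t := ht
  beta_reduce
  rw [Real.mul_rpow hr.le ht0.le]
  field_simp

/-- Pointwise bound for the integrand. -/
lemma integrand_bound {s n N : ℝ} (hn : 0 < n) (hnN : n ≤ N) {y : ℝ} (hy : 0 < y) :
    ‖y ^ (s + 1/2) * realIncGamma (-(1/2)) (n * y) * realIncGamma (-(1/2)) (N * y)
      * Real.exp (n * y) / y‖
    ≤ 4 * (n ^ (-(1/2:ℝ)) * N ^ (-(1/2:ℝ)))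
        * (y ^ (s - 1/2 - 1) * Real.exp (-(N * y))) := by
  have hN : 0 < N := hn.trans_le hnN
  have hny : 0 < n * y := mul_pos hn hy
  have hNy : 0 < N * y := mul_pos hN hy
  have g1 := incGamma_nonneg hny
  have g2 := incGamma_nonneg hNy
  rw [Real.norm_eq_abs, abs_of_nonneg (by positivity)]
  have h1 := incGamma_le hny
  have h2 := incGamma_le hNy
  calc y ^ (s + 1/2) * realIncGamma (-(1/2)) (n * y) * realIncGamma (-(1/2)) (N * y)
          * Real.exp (n * y) / y
      ≤ y ^ (s + 1/2) * (2 * (n * y) ^ (-(1/2:ℝ)) * Real.exp (-(n * y)))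
          * (2 * (N * y) ^ (-(1/2:ℝ)) * Real.exp (-(N * y)))
          * Real.exp (n * y) / y := by
        gcongr
    _ = 4 * (n ^ (-(1/2:ℝ)) * N ^ (-(1/2:ℝ)))
          * (y ^ (s - 1/2 - 1) * Real.exp (-(N * y))) := by
        rw [Real.mul_rpow hn.le hy.le, Real.mul_rpow hN.le hy.le]
        have e1 : Real.exp (-(n * y)) * Real.exp (n * y) = 1 := by
          rw [← Real.exp_add]; simp
        have e2 : y ^ (s + 1/2) * y ^ (-(1/2:ℝ)) * y ^ (-(1/2:ℝ)) / y
            = y ^ (s - 1/2 - 1) := by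
          rw [← Real.rpow_add hy, ← Real.rpow_add hy, Real.rpow_sub_one hy.ne']
          rw [show s + 1/2 + -(1/2:ℝ) + -(1/2:ℝ) = s - 1/2 by ring]
        calc y ^ (s + 1/2) * (2 * (n ^ (-(1/2:ℝ)) * y ^ (-(1/2:ℝ))) * Real.exp (-(n * y)))
              * (2 * (N ^ (-(1/2:ℝ)) * y ^ (-(1/2:ℝ))) * Real.exp (-(N * y)))
              * Real.exp (n * y) / y
            = 4 * (n ^ (-(1/2:ℝ)) * N ^ (-(1/2:ℝ)))
                * (y ^ (s + 1/2) * y ^ (-(1/2:ℝ)) * y ^ (-(1/2:ℝ)) / y)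
                * (Real.exp (-(n * y)) * Real.exp (n * y)) * Real.exp (-(N * y)) := by
              ring
          _ = _ := by rw [e1, e2]; ring

lemma main_integrableOn {s : ℝ} (hs : 1/2 < s) {n N : ℝ} (hn : 0 < n) (hnN : n ≤ N) :
    IntegrableOn
      (fun y : ℝ => y ^ (s + 1/2) * realIncGamma (-(1/2)) (n * y)
        * realIncGamma (-(1/2)) (N * y) * Real.exp (n * y) / y) (Set.Ioi 0) := by
  have hN : 0 < N := hn.trans_le hnN
  have hg : IntegrableOn (fun y : ℝ => 4 * (n ^ (-(1/2:ℝ)) * N ^ (-(1/2:ℝ)))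
      * (y ^ (s - 1/2 - 1) * Real.exp (-(N * y)))) (Set.Ioi 0) :=
    (gammaType_integrableOn (by linarith : (0:ℝ) < s - 1/2) hN).const_mul _
  refine Integrable.mono' hg ?_ ?_
  · have hm1 : AEMeasurable (fun y => realIncGamma (-(1/2)) (n * y))
        (volume.restrict (Set.Ioi 0)) := by
      refine aemeasurable_restrict_of_antitoneOn measurableSet_Ioi ?_
      intro a ha b hb hab
      exact incGamma_anti (mul_pos hn ha) (by nlinarith [mem_Ioi.1 ha])
    have hm2 : AEMeasurable (fun y => realIncGamma (-(1/2)) (N * y))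
        (volume.restrict (Set.Ioi 0)) := by
      refine aemeasurable_restrict_of_antitoneOn measurableSet_Ioi ?_
      intro a ha b hb hab
      exact incGamma_anti (mul_pos hN ha) (by nlinarith [mem_Ioi.1 ha])
    have hm0 : AEMeasurable (fun y : ℝ => y ^ (s + 1/2))
        (volume.restrict (Set.Ioi 0)) :=
      ContinuousOn.aemeasurable (continuousOn_id.rpow_const
        (fun t ht => Or.inl (ne_of_gt ht))) measurableSet_Ioi
    exact ((((hm0.mul hm1).mul hm2).mul
      ((Real.measurable_exp.comp (measurable_const_mul n)).aemeasurable)).div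
      aemeasurable_id).aestronglyMeasurable
  · filter_upwards [ae_restrict_mem measurableSet_Ioi] with y hy
    exact integrand_bound hn hnN hy

theorem Gfun_integrable_and_bound (s : ℝ) (hs : 1/2 < s) :
    (∀ n N : ℝ, 0 < n → n ≤ N →
      IntegrableOn
        (fun y : ℝ => y ^ (s + 1/2) * realIncGamma (-(1/2)) (n * y)
          * realIncGamma (-(1/2)) (N * y) * Real.exp (n * y) / y) (Set.Ioi 0)) ∧
    ∃ C : ℝ, 0 < C ∧ ∀ n : ℝ, 0 < n → |Gfun s n n| ≤ C * n ^ (-s - 1/2) := by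
  constructor
  · exact fun n N hn hnN => main_integrableOn hs hn hnN
  · have hs' : (0:ℝ) < s - 1/2 := by linarith
    refine ⟨4 * Real.Gamma (s - 1/2),
      by have := Real.Gamma_pos_of_pos hs'; positivity, ?_⟩
    intro n hn
    have hg : IntegrableOn (fun y : ℝ => 4 * (n ^ (-(1/2:ℝ)) * n ^ (-(1/2:ℝ)))
        * (y ^ (s - 1/2 - 1) * Real.exp (-(n * y)))) (Set.Ioi 0) :=
      (gammaType_integrableOn hs' hn).const_mul _
    have hb : |Gfun s n n| ≤ ∫ y in Set.Ioi (0:ℝ),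
        4 * (n ^ (-(1/2:ℝ)) * n ^ (-(1/2:ℝ)))
          * (y ^ (s - 1/2 - 1) * Real.exp (-(n * y))) := by
      rw [← Real.norm_eq_abs, Gfun]
      refine norm_integral_le_of_norm_le hg ?_
      filter_upwards [ae_restrict_mem measurableSet_Ioi] with y hy
      exact integrand_bound hn le_rfl hy
    refine hb.trans ?_
    rw [MeasureTheory.integral_const_mul,
      show (fun y : ℝ => y ^ (s - 1/2 - 1) * Real.exp (-(n * y)))
        = fun y : ℝ => y ^ ((s - 1/2) - 1) * Real.exp (-(n * y)) by norm_num,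
      Real.integral_rpow_mul_exp_neg_mul_Ioi hs' hn]
    have e1 : n ^ (-(1/2:ℝ)) * n ^ (-(1/2:ℝ)) = n ^ (-1:ℝ) := by
      rw [← Real.rpow_add hn]; norm_num
    have e2 : ((1:ℝ)/n) ^ (s - 1/2) = n ^ (-(s - 1/2)) := by
      rw [one_div, Real.inv_rpow hn.le, ← Real.rpow_neg hn.le]
    rw [e1, e2]
    have e3 : n ^ (-1:ℝ) * n ^ (-(s - 1/2)) = n ^ (-s - 1/2) := by
      rw [← Real.rpow_add hn]; congr 1; ring
    apply le_of_eq
    rw [← e3]; ring
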